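/- Let T be a 1-dimensional complex triassociative algebra with basis {x} such that x ⊢ x = x. Then x ⊣ x = x and x ⊥ x = x. -/

import Mathlib

/-- A triassociative algebra structure on a complex vector space `T`:
three bilinear operations `l` (⊢), `r` (⊣), `m` (⊥) satisfying the
11 Loday–Ronco identities. -/
structure Trias (T : Type*) [AddCommGroup T] [Module ℂ T] where
  l : T →ₗ[ℂ] T →ₗ[ℂ] T
  r : T →ₗ[ℂ] T →ₗ[ℂ] T
  m : T →ₗ[ℂ] T →ₗ[ℂ] T
  A1 : ∀ x y z, l (l x y) z = l x (l y z)
  A2 : ∀ x y z, r (r x y) z = r x (r y z)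
  D1 : ∀ x y z, l (r x y) z = l x (l y z)
  D2 : ∀ x y z, r (r x y) z = r x (l y z)
  S1 : ∀ x y z, r (l x y) z = l x (r y z)
  T1 : ∀ x y z, l (m x y) z = l x (l y z)
  T2 : ∀ x y z, r (r x y) z = r x (m y z)
  T3 : ∀ x y z, m (l x y) z = l x (m y z)
  T4 : ∀ x y z, r (m x y) z = m x (r y z)
  S2 : ∀ x y z, m (r x y) z = m x (l y z)
  A3 : ∀ x y z, m (m x y) z = m x (m y z)

lemma fin1_basis_eq {T : Type*} [AddCommGroup T] [Module ℂ T]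
    (b : Module.Basis (Fin 1) ℂ T) (v : T) : v = b.repr v 0 • b 0 := by
  conv_lhs => rw [← b.sum_repr v]
  simp [Fin.sum_univ_one]

theorem stmt3 {T : Type*} [AddCommGroup T] [Module ℂ T]
    (b : Module.Basis (Fin 1) ℂ T) (A : Trias T)
    (h : A.l (b 0) (b 0) = b 0) :
    A.r (b 0) (b 0) = b 0 ∧ A.m (b 0) (b 0) = b 0 := by
  set x := b 0 with hx
  obtain ⟨c, hc⟩ : ∃ c : ℂ, A.r x x = c • x := ⟨_, fin1_basis_eq b _⟩
  obtain ⟨d, hd⟩ : ∃ d : ℂ, A.m x x = d • x := ⟨_, fin1_basis_eq b _⟩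
  have hxne : x ≠ 0 := b.ne_zero 0
  have hD1 := A.D1 x x x
  rw [hc, map_smul, LinearMap.smul_apply, h, h] at hD1
  -- hD1 : c • x = x
  have hc1 : c = 1 := by
    have := smul_left_injective ℂ hxne (hD1.trans (one_smul ℂ x).symm)
    exact this
  have hr : A.r x x = x := by rw [hc, hc1, one_smul]
  refine ⟨hr, ?_⟩
  have hT2 := A.T2 x x x
  rw [hr, hr, hd, map_smul, hr] at hT2
  -- hT2 : x = d • x
  have hd1 : d = 1 := smul_left_injective ℂ hxne ((hT2.symm).trans (one_smul ℂ x).symm)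
  rw [hd, hd1, one_smul]
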